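/- Under the setup of the previous lemma (M symmetric PSD of rank r with smallest positive eigenvalue λ_r, G symmetric with ‖G‖_F = δ and P_⊥ G P_⊥ = 0), if δ is small enough (e.g., δ ≤ λ_r/2), then vᵀ(M+G)v ≥ −2δ²/λ_r for all unit vectors v; consequently M + G + (2δ²/λ_r) I is positive semidefinite. -/

import Mathlib

open Matrix

attribute [local instance] Matrix.frobeniusSeminormedAddCommGroup

private lemma dot_helper {n m : ℕ} (A : Matrix (Fin n) (Fin m) ℝ) (v : Fin m → ℝ)
    (w : Fin n → ℝ) : (A *ᵥ v) ⬝ᵥ w = v ⬝ᵥ (Aᵀ *ᵥ w) := by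
  rw [← Matrix.vecMul_transpose, ← Matrix.dotProduct_mulVec]

private lemma cs_aux {n m : ℕ} (G : Matrix (Fin n) (Fin m) ℝ) (w : Fin n → ℝ) (z : Fin m → ℝ) :
    (w ⬝ᵥ (G *ᵥ z))^2 ≤ ((∑ i, ∑ j, G i j ^2) * (z ⬝ᵥ z)) * (w ⬝ᵥ w) := by
  have h1 : (w ⬝ᵥ (G *ᵥ z))^2 ≤ (∑ i, w i ^ 2) * ∑ i, (G *ᵥ z) i ^ 2 := by
    simpa [dotProduct, sq] using Finset.sum_mul_sq_le_sq_mul_sq Finset.univ w (G *ᵥ z)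
  have h2 : ∑ i, (G *ᵥ z) i ^ 2 ≤ (∑ i, ∑ j, G i j ^2) * (z ⬝ᵥ z) := by
    rw [Finset.sum_mul]
    refine Finset.sum_le_sum fun i _ => ?_
    simpa [mulVec, dotProduct, sq] using Finset.sum_mul_sq_le_sq_mul_sq Finset.univ (G i) z
  have hw : (0:ℝ) ≤ ∑ i, w i ^ 2 := by positivity
  calc (w ⬝ᵥ (G *ᵥ z))^2 ≤ (∑ i, w i ^ 2) * ∑ i, (G *ᵥ z) i ^ 2 := h1
    _ ≤ (∑ i, w i ^ 2) * ((∑ i, ∑ j, G i j ^2) * (z ⬝ᵥ z)) := by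
        exact mul_le_mul_of_nonneg_left h2 hw
    _ = ((∑ i, ∑ j, G i j ^2) * (z ⬝ᵥ z)) * (w ⬝ᵥ w) := by
        simp [dotProduct, sq]; ring

private lemma quad_aux (lr δ s t c : ℝ) (hlr : 0 < lr) (hδ0 : 0 ≤ δ) (hδs : δ ≤ lr/2)
    (hs0 : 0 ≤ s) (ht0 : 0 ≤ t)
    (hc : c^2 ≤ (δ^2 * t) * s) :
    0 ≤ (lr*(lr-δ)+2*δ^2)*s + 2*δ^2*t + 2*lr*c := by
  have hA : 0 ≤ lr*(lr-δ)+2*δ^2 := by nlinarith [sq_nonneg δ]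
  have ha : 0 ≤ (lr*(lr-δ)+2*δ^2)*s + 2*δ^2*t := by positivity
  have hc2 : lr^2*c^2 ≤ lr^2*((δ^2*t)*s) := by nlinarith [sq_nonneg lr]
  have d1 : 0 ≤ δ^2*(lr-2*δ)^2*(s*t) := by positivity
  have d2 : 0 ≤ lr*δ^3*(s*t) := by positivity
  nlinarith [hc2, sq_nonneg ((lr*(lr-δ)+2*δ^2)*s - 2*δ^2*t), ha, d1, d2]

theorem stmt_17 {n r : ℕ} (U : Matrix (Fin n) (Fin r) ℝ) (hU : Uᵀ * U = 1)
    (Λ : Fin r → ℝ) (lr : ℝ) (hlr : 0 < lr) (hΛ : ∀ i, lr ≤ Λ i)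
    (M : Matrix (Fin n) (Fin n) ℝ) (hM : M = U * Matrix.diagonal Λ * Uᵀ)
    (G : Matrix (Fin n) (Fin n) ℝ) (hGt : Gᵀ = G)
    (δ : ℝ) (hδ : ‖G‖ = δ) (hδs : δ ≤ lr / 2)
    (hGperp : (1 - U * Uᵀ) * G * (1 - U * Uᵀ) = 0) :
    (∀ v : Fin n → ℝ, v ⬝ᵥ v = 1 → -(2 * δ ^ 2 / lr) ≤ v ⬝ᵥ ((M + G) *ᵥ v)) ∧
    (M + G + (2 * δ ^ 2 / lr) • (1 : Matrix (Fin n) (Fin n) ℝ)).PosSemidef := by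
  have hδ0 : 0 ≤ δ := hδ ▸ norm_nonneg G
  have hFr : ∑ i, ∑ j, G i j ^ 2 = δ ^ 2 := by
    rw [← hδ, Matrix.frobenius_norm_def,
      ← Real.rpow_natCast _ 2, ← Real.rpow_mul (by positivity)]
    norm_num
  -- key quadratic bound, homogeneous version
  have key : ∀ v : Fin n → ℝ, -(2 * δ ^ 2 / lr) * (v ⬝ᵥ v) ≤ v ⬝ᵥ ((M + G) *ᵥ v) := by
    intro v
    have hPt : (1 - U * Uᵀ)ᵀ = 1 - U * Uᵀ := by
      simp [Matrix.transpose_sub, Matrix.transpose_mul]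
    obtain ⟨x, hx⟩ : ∃ x, x = Uᵀ *ᵥ v := ⟨_, rfl⟩
    obtain ⟨p, hp⟩ : ∃ p, p = U *ᵥ x := ⟨_, rfl⟩
    obtain ⟨y, hy⟩ : ∃ y, y = v - p := ⟨_, rfl⟩
    have hpv : p ⬝ᵥ v = x ⬝ᵥ x := by
      rw [hp, dot_helper, ← hx]
    have hpp : p ⬝ᵥ p = x ⬝ᵥ x := by
      rw [hp, dot_helper, Matrix.mulVec_mulVec, hU, Matrix.one_mulVec]
    obtain ⟨s, hs⟩ : ∃ s, s = x ⬝ᵥ x := ⟨_, rfl⟩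
    obtain ⟨t, ht⟩ : ∃ t, t = y ⬝ᵥ y := ⟨_, rfl⟩
    have hs0 : 0 ≤ s := by
      rw [hs]; exact Finset.sum_nonneg fun i _ => mul_self_nonneg _
    have ht0 : 0 ≤ t := by
      rw [ht]; exact Finset.sum_nonneg fun i _ => mul_self_nonneg _
    have hpy : p ⬝ᵥ y = 0 := by
      rw [hy, dotProduct_sub, hpv, hpp, sub_self]
    have hyp : y ⬝ᵥ p = 0 := by rw [dotProduct_comm]; exact hpy
    have hv : v = p + y := by rw [hy]; ring
    have hst : s + t = v ⬝ᵥ v := by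
      calc s + t = (p + y) ⬝ᵥ (p + y) := by
            rw [dotProduct_add, add_dotProduct, add_dotProduct, hpy, hyp, hpp, hs, ht]
            ring
        _ = v ⬝ᵥ v := by rw [← hv]
    have hyP : y = (1 - U * Uᵀ) *ᵥ v := by
      rw [hy, Matrix.sub_mulVec, Matrix.one_mulVec, hp, hx, Matrix.mulVec_mulVec]
    have hyGy : y ⬝ᵥ (G *ᵥ y) = 0 := by
      rw [hyP, dot_helper, hPt, Matrix.mulVec_mulVec, Matrix.mulVec_mulVec,
        hGperp, Matrix.zero_mulVec, dotProduct_zero]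
    have hyGp : y ⬝ᵥ (G *ᵥ p) = p ⬝ᵥ (G *ᵥ y) := by
      rw [dotProduct_comm, dot_helper, hGt]
    have hMv : v ⬝ᵥ (M *ᵥ v) = ∑ i, Λ i * x i ^ 2 := by
      rw [hM, dotProduct_comm, ← Matrix.mulVec_mulVec, ← Matrix.mulVec_mulVec,
        dot_helper, ← hx]
      simp only [dotProduct, Matrix.mulVec_diagonal]
      exact Finset.sum_congr rfl fun i _ => by ring
    have hMlb : lr * s ≤ v ⬝ᵥ (M *ᵥ v) := by
      rw [hMv, hs]
      have hterm : ∀ i ∈ Finset.univ, lr * (x i * x i) ≤ Λ i * x i ^ 2 := fun i _ => by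
        have := hΛ i
        nlinarith [sq_nonneg (x i)]
      calc lr * (x ⬝ᵥ x) = ∑ i, lr * (x i * x i) := by rw [dotProduct, Finset.mul_sum]
        _ ≤ ∑ i, Λ i * x i ^ 2 := Finset.sum_le_sum hterm
    have hGv : v ⬝ᵥ (G *ᵥ v) = p ⬝ᵥ (G *ᵥ p) + 2 * (p ⬝ᵥ (G *ᵥ y)) := by
      conv_lhs => rw [hv]
      rw [Matrix.mulVec_add, add_dotProduct, dotProduct_add, dotProduct_add, hyGy, hyGp]
      ring
    obtain ⟨d, hd⟩ : ∃ d, d = p ⬝ᵥ (G *ᵥ p) := ⟨_, rfl⟩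
    obtain ⟨c, hc⟩ : ∃ c, c = p ⬝ᵥ (G *ᵥ y) := ⟨_, rfl⟩
    have hdb : d ^ 2 ≤ (δ ^ 2 * s) * s := by
      have h := cs_aux G p p
      rw [hFr, hpp, ← hs, ← hd] at h
      exact h
    have hcb : c ^ 2 ≤ (δ ^ 2 * t) * s := by
      have h := cs_aux G p y
      rw [hFr, hpp, ← hs, ← ht, ← hc] at h
      exact h
    have hds : -(δ * s) ≤ d := by nlinarith [mul_nonneg hδ0 hs0]
    have hQ : 0 ≤ (lr*(lr-δ)+2*δ^2)*s + 2*δ^2*t + 2*lr*c :=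
      quad_aux lr δ s t c hlr hδ0 hδs hs0 ht0 hcb
    rw [Matrix.add_mulVec, dotProduct_add, hGv, ← hst, ← hd, ← hc]
    have heq : -(2 * δ ^ 2 / lr) * (s + t) = (-(2 * δ ^ 2) * (s + t)) / lr := by ring
    rw [heq, div_le_iff₀ hlr]
    nlinarith [hQ, mul_le_mul_of_nonneg_left hMlb hlr.le,
      mul_le_mul_of_nonneg_left hds hlr.le]
  constructor
  · intro v hv
    have h := key v
    rw [hv, mul_one] at h
    exact h
  · refine Matrix.PosSemidef.of_dotProduct_mulVec_nonneg ?_ ?_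
    · have hMt : Mᵀ = M := by
        rw [hM]
        simp [Matrix.transpose_mul, Matrix.mul_assoc]
      show (M + G + (2 * δ ^ 2 / lr) • (1 : Matrix (Fin n) (Fin n) ℝ))ᴴ = _
      have hct : ∀ B : Matrix (Fin n) (Fin n) ℝ, Bᴴ = Bᵀ := fun B => by
        ext i j; simp [Matrix.conjTranspose_apply]
      rw [hct, Matrix.transpose_add, Matrix.transpose_add, hMt, hGt,
        Matrix.transpose_smul, Matrix.transpose_one]
    · intro x
      have hkey := key x
      have hx0 : 0 ≤ x ⬝ᵥ x := Finset.sum_nonneg fun i _ => mul_self_nonneg _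
      have hstar : star x = x := by simp
      rw [hstar, Matrix.add_mulVec, dotProduct_add, Matrix.smul_mulVec,
        Matrix.one_mulVec, dotProduct_smul]
      have hsm : (2 * δ ^ 2 / lr) • (x ⬝ᵥ x) = (2 * δ ^ 2 / lr) * (x ⬝ᵥ x) := rfl
      rw [hsm]
      nlinarith [hkey]
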